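/- Assume ran(Ṽ) is closed and let n ≥ 1. Then: (1) ker(Ṽ†^(n)) is contained in the closed linear span of ⋃_{i=0}^{n−1} Ṽ_i(H_i(W)); (2) if moreover the representation is regular, then ker(Ṽ_n) equals the closed linear span of ⋃_{i=0}^{n−1} (I_{E^{⊗(n−i)}} ⊗ Ṽ†^(i))(E^{⊗(n−i−1)} ⊙ W†), where for a subspace K ⊆ H_1 and j ≥ 0, E^{⊗j} ⊙ K := {ξ ∈ H_{j+1} : for every word α with |α| = j the block (ξ_{αi})_{1≤i≤d} lies in K}. -/

import Mathlib

open scoped InnerProductSpace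

noncomputable section

variable (H : Type) [NormedAddCommGroup H] [InnerProductSpace ℂ H]

/-- Words of length `n` in the alphabet `{1,…,d}`. -/
abbrev Word (d n : ℕ) := Fin n → Fin d

/-- `H_n`: the ℓ²-direct sum of copies of `H` indexed by words of length `n`. -/
abbrev Hn (d n : ℕ) := PiLp 2 (fun _ : Word d n => H)

instance instHnCompleteSpace [CompleteSpace H] (d n : ℕ) : CompleteSpace (Hn H d n) :=
  ((PiLp.continuousLinearEquiv 2 ℂ (fun _ : Word d n => H)).isUniformEmbedding.completeSpace_congr
    (PiLp.continuousLinearEquiv 2 ℂ (fun _ : Word d n => H)).surjective).mpr inferInstance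

/-- The coordinate projection `H_m → H` at the word `α`. -/
def coord (d m : ℕ) (α : Word d m) : Hn H d m →L[ℂ] H :=
  PiLp.proj 2 (fun _ : Word d m => H) α

/-- The embedding `H → H_n` into the coordinate at the word `α`. -/
def singleCLM (d n : ℕ) (α : Word d n) : H →L[ℂ] Hn H d n :=
  ((PiLp.continuousLinearEquiv 2 ℂ (fun _ : Word d n => H)).symm.toContinuousLinearMap).comp
    (ContinuousLinearMap.pi (fun β : Word d n =>
      if β = α then ContinuousLinearMap.id ℂ H else 0))

/-- `V_α := V_{α_1} ∘ ⋯ ∘ V_{α_n}` for a word `α`. -/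
def Vword {d : ℕ} (V : Fin d → H →L[ℂ] H) : (n : ℕ) → Word d n → (H →L[ℂ] H)
  | 0, _ => ContinuousLinearMap.id ℂ H
  | (n + 1), α => (V (α 0)).comp (Vword V n (fun i => α i.succ))

/-- `Ṽ_n : H_n → H`, `Ṽ_n((h_α)_α) = Σ_α V_α h_α`. -/
def Vtilde {d : ℕ} (V : Fin d → H →L[ℂ] H) (n : ℕ) : Hn H d n →L[ℂ] H :=
  ∑ α : Word d n, (Vword H V n α).comp (coord H d n α)

/-- Extraction of the `α`-block: `H_{n+j} → H_j`. -/
def blockIn (d n j : ℕ) (α : Word d n) : Hn H d (n + j) →L[ℂ] Hn H d j :=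
  ((PiLp.continuousLinearEquiv 2 ℂ (fun _ : Word d j => H)).symm.toContinuousLinearMap).comp
    (ContinuousLinearMap.pi (fun γ : Word d j => coord H d (n + j) (Fin.append α γ)))

/-- Insertion of the `α`-block: `H_k → H_{n+k}`. -/
def blockOut (d n k : ℕ) (α : Word d n) : Hn H d k →L[ℂ] Hn H d (n + k) :=
  ((PiLp.continuousLinearEquiv 2 ℂ (fun _ : Word d (n + k) => H)).symm.toContinuousLinearMap).comp
    (ContinuousLinearMap.pi (fun β : Word d (n + k) =>
      if (fun i : Fin n => β (Fin.castAdd k i)) = α then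
        coord H d k (fun i : Fin k => β (Fin.natAdd n i)) else 0))

/-- The amplification `I_{E^{⊗n}} ⊗ R : H_{n+j} → H_n` of a map `R : H_j → H`. -/
def ampV (d n j : ℕ) (R : Hn H d j →L[ℂ] H) : Hn H d (n + j) →L[ℂ] Hn H d n :=
  ∑ α : Word d n, (singleCLM H d n α).comp (R.comp (blockIn H d n j α))

/-- The amplification `I_{E^{⊗n}} ⊗ S : H_n → H_{n+k}` of a map `S : H → H_k`. -/
def ampS (d n k : ℕ) (S : H →L[ℂ] Hn H d k) : Hn H d n →L[ℂ] Hn H d (n + k) :=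
  ∑ α : Word d n, (blockOut H d n k α).comp (S.comp (coord H d n α))

/-- The amplification `I_{E^{⊗n}} ⊗ T : H_n → H_n` of a map `T : H → H`. -/
def ampHH (d n : ℕ) (T : H →L[ℂ] H) : Hn H d n →L[ℂ] Hn H d n :=
  ∑ α : Word d n, (singleCLM H d n α).comp (T.comp (coord H d n α))

/-- The amplification `I_{E^{⊗n}} ⊗ R : H_{n+j} → H_{n+k}` of a map `R : H_j → H_k`. -/
def ampGen (d n j k : ℕ) (R : Hn H d j →L[ℂ] Hn H d k) :
    Hn H d (n + j) →L[ℂ] Hn H d (n + k) :=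
  ∑ α : Word d n, (blockOut H d n k α).comp (R.comp (blockIn H d n j α))

/-- The iterates `S^{(n)} : H → H_n` of a map `S : H → H_1`:
`S^{(0)} = I_H` and `S^{(n+1)} = (I_{E^{⊗n}} ⊗ S) ∘ S^{(n)}`. -/
def Siter {d : ℕ} (S : H →L[ℂ] Hn H d 1) : (n : ℕ) → (H →L[ℂ] Hn H d n)
  | 0 => singleCLM H d 0 (fun i => i.elim0)
  | (n + 1) => (ampS H d n 1 S).comp (Siter S n)

/-- The generalized range `R^∞(V) = ⋂_{n ≥ 1} ran Ṽ_n`. -/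
def Rinf {d : ℕ} (V : Fin d → H →L[ℂ] H) : Submodule ℂ H :=
  ⨅ (n : ℕ) (_ : 1 ≤ n), LinearMap.range (Vtilde H V n).toLinearMap

/-- `H_n(K)`: families all of whose entries lie in `K` (realizing `E^{⊗n} ⊗ K`). -/
def HnSub (d n : ℕ) (K : Submodule ℂ H) : Submodule ℂ (Hn H d n) :=
  ⨅ α : Word d n, K.comap (coord H d n α).toLinearMap

/-- The representation is regular: `ran Ṽ` is closed and
`ker Ṽ_n ⊆ ran (I_{E^{⊗n}} ⊗ Ṽ_m)` for all `n, m ≥ 1`. -/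
def RepRegular {d : ℕ} (V : Fin d → H →L[ℂ] H) : Prop :=
  IsClosed (LinearMap.range (Vtilde H V 1).toLinearMap : Set H) ∧
    ∀ n m : ℕ, 1 ≤ n → 1 ≤ m →
      LinearMap.ker (Vtilde H V n).toLinearMap ≤ LinearMap.range (ampV H d n m (Vtilde H V m)).toLinearMap

/-- The reduced minimum modulus `γ(T)`. -/
def rmm {X Y : Type*} [NormedAddCommGroup X] [InnerProductSpace ℂ X]
    [NormedAddCommGroup Y] [InnerProductSpace ℂ Y] (T : X →L[ℂ] Y) : ℝ :=
  sInf ((fun ξ => ‖T ξ‖ / Metric.infDist ξ (LinearMap.ker T.toLinearMap : Set X)) ''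
    {ξ : X | ξ ∉ LinearMap.ker T.toLinearMap})

/-- The cast `H_m → H_k` along an equality `m = k` of word lengths. -/
def castHn (d : ℕ) {m k : ℕ} (h : m = k) : Hn H d m →L[ℂ] Hn H d k := by
  subst h; exact ContinuousLinearMap.id ℂ _

/-- `E^{⊗j} ⊙ K ⊆ H_{j+1}`: families all of whose `1`-blocks lie in `K ⊆ H_1`. -/
def odotSub (d j : ℕ) (K : Submodule ℂ (Hn H d 1)) : Submodule ℂ (Hn H d (j + 1)) :=
  ⨅ α : Word d j, K.comap (blockIn H d j 1 α).toLinearMap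

end

set_option linter.unusedSectionVars false
noncomputable section Aux
variable {H : Type} [NormedAddCommGroup H] [InnerProductSpace ℂ H] [CompleteSpace H]
variable {d : ℕ}

lemma coord_apply (m : ℕ) (α : Word d m) (x : Hn H d m) : coord H d m α x = x α := rfl

lemma castHn_apply {m k : ℕ} (h : m = k) (x : Hn H d m) (β : Word d k) :
    castHn H d h x β = x (fun i => β (Fin.cast h i)) := by subst h; rfl

lemma singleCLM_apply (n : ℕ) (α : Word d n) (h : H) (β : Word d n) :
    singleCLM H d n α h β = if β = α then h else 0 := by
  simp only [singleCLM]
  by_cases hb : β = α <;> simp [hb, ContinuousLinearMap.pi_apply] <;> rfl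

lemma blockIn_apply (n j : ℕ) (α : Word d n) (x : Hn H d (n + j)) (γ : Word d j) :
    blockIn H d n j α x γ = x (Fin.append α γ) := rfl

lemma Vtilde_apply (V : Fin d → H →L[ℂ] H) (n : ℕ) (x : Hn H d n) :
    Vtilde H V n x = ∑ α : Word d n, Vword H V n α (x α) := by
  simp [Vtilde, ContinuousLinearMap.sum_apply, coord_apply]

lemma blockOut_apply (n k : ℕ) (α : Word d n) (y : Hn H d k) (β : Word d (n + k)) :
    blockOut H d n k α y β =
      if (fun i : Fin n => β (Fin.castAdd k i)) = α then
        y (fun i : Fin k => β (Fin.natAdd n i)) else 0 := by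
  simp only [blockOut]
  by_cases hb : (fun i : Fin n => β (Fin.castAdd k i)) = α <;>
    simp [hb, ContinuousLinearMap.pi_apply] <;> rfl

lemma Hn_sum_apply {m : ℕ} {ι : Type*} (s : Finset ι) (f : ι → Hn H d m) (β : Word d m) :
    (∑ i ∈ s, f i) β = ∑ i ∈ s, f i β := by
  rw [WithLp.ofLp_sum]; exact Finset.sum_apply β s _

lemma ampS_apply (n k : ℕ) (S : H →L[ℂ] Hn H d k) (x : Hn H d n) (β : Word d (n + k)) :
    ampS H d n k S x β =
      S (x (fun i => β (Fin.castAdd k i))) (fun i => β (Fin.natAdd n i)) := by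
  have h0 : ampS H d n k S x β = ∑ α : Word d n, blockOut H d n k α (S (x α)) β := by
    simp only [ampS, ContinuousLinearMap.sum_apply, ContinuousLinearMap.comp_apply, coord_apply]
    exact Hn_sum_apply _ _ _
  rw [h0, Finset.sum_congr rfl (fun α _ => blockOut_apply n k α (S (x α)) β),
    Finset.sum_ite_eq Finset.univ (fun i : Fin n => β (Fin.castAdd k i))
      (fun α => S (x α) (fun i : Fin k => β (Fin.natAdd n i)))]
  simp

lemma ampV_apply (n j : ℕ) (R : Hn H d j →L[ℂ] H) (x : Hn H d (n + j)) (α : Word d n) :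
    ampV H d n j R x α = R (WithLp.toLp 2 (fun γ => x (Fin.append α γ))) := by
  have h0 : ampV H d n j R x α
      = ∑ α' : Word d n, singleCLM H d n α' (R (blockIn H d n j α' x)) α := by
    simp only [ampV, ContinuousLinearMap.sum_apply, ContinuousLinearMap.comp_apply]
    exact Hn_sum_apply _ _ _
  rw [h0, Finset.sum_congr rfl (fun α' _ => singleCLM_apply n α' _ α),
    Finset.sum_ite_eq Finset.univ α (fun α' => R (blockIn H d n j α' x))]
  simp only [Finset.mem_univ, if_true]
  rfl

lemma Vword_one (V : Fin d → H →L[ℂ] H) (w : Word d 1) : Vword H V 1 w = V (w 0) := by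
  simp [Vword]

lemma Vword_cons (V : Fin d → H →L[ℂ] H) (n : ℕ) (j : Fin d) (γ : Word d n) :
    Vword H V (n + 1) (Fin.cons j γ) = (V j).comp (Vword H V n γ) := by
  rw [Vword]
  simp [Fin.cons_succ]

lemma Vword_succ_right (V : Fin d → H →L[ℂ] H) (m : ℕ) (α : Word d (m + 1)) :
    Vword H V (m + 1) α
      = (Vword H V m (fun i => α i.castSucc)).comp (V (α (Fin.last m))) := by
  induction m with
  | zero =>
      show (V (α 0)).comp _ = _
      simp [Vword]
  | succ m ih =>
      have e0 : Vword H V (m + 1 + 1) α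
          = (V (α 0)).comp (Vword H V (m + 1) (fun i => α i.succ)) := rfl
      rw [e0, ih (fun i => α i.succ)]
      have h1 : (fun i : Fin m => α (Fin.succ (Fin.castSucc i)))
          = fun i : Fin m => α (Fin.castSucc (Fin.succ i)) := by
        funext i; rw [Fin.succ_castSucc]
      have h2 : α (Fin.succ (Fin.last m)) = α (Fin.last (m + 1)) := by
        congr 1
      rw [h1, h2, ← ContinuousLinearMap.comp_assoc]
      rw [show Vword H V (m + 1) (fun i => α i.castSucc)
          = (V (α (Fin.castSucc 0))).comp
              (Vword H V m (fun i => α (Fin.castSucc i.succ))) from rfl]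
      have h3 : α (Fin.castSucc 0) = α 0 := by congr 1
      rw [h3]

lemma Vword_append (V : Fin d → H →L[ℂ] H) (n k : ℕ) (α : Word d n) (γ : Word d k) :
    Vword H V (n + k) (Fin.append α γ) = (Vword H V n α).comp (Vword H V k γ) := by
  induction k with
  | zero =>
      have h : Fin.append α γ = α := by
        funext i
        have hi : i = Fin.castAdd 0 i := by ext; rfl
        conv_lhs => rw [hi]
        rw [Fin.append_left]
      rw [h]
      rfl
  | succ k ih =>
      refine Eq.trans (Vword_succ_right V (n + k) (Fin.append (m := n) (n := k+1) α γ)) ?_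
      have h1 : (fun i : Fin (n + k) => Fin.append α γ i.castSucc)
          = Fin.append (m := n) (n := k) α (fun i => γ i.castSucc) := by
        funext i
        refine Fin.addCases (fun i => ?_) (fun i => ?_) i
        · have : (Fin.castAdd k i).castSucc = Fin.castAdd (k + 1) i := by ext; rfl
          rw [this, Fin.append_left, Fin.append_left]
        · have : (Fin.natAdd n i).castSucc = Fin.natAdd n i.castSucc := by ext; rfl
          rw [this, Fin.append_right, Fin.append_right]
      have h2 : Fin.append α γ (Fin.last (n + k)) = γ (Fin.last k) := by
        have : Fin.last (n + k) = Fin.natAdd n (Fin.last k) := by ext; simp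
        rw [this, Fin.append_right]
      rw [h1, h2, ih (fun i => γ i.castSucc), ContinuousLinearMap.comp_assoc]
      congr 1
      exact (Vword_succ_right V k γ).symm

lemma sum_append {M : Type*} [AddCommMonoid M] (n k : ℕ) (f : Word d (n + k) → M) :
    ∑ β : Word d (n + k), f β
      = ∑ α : Word d n, ∑ γ : Word d k, f (Fin.append α γ) := by
  have h1 : ∑ β : Word d (n + k), f β
      = ∑ p : (Fin n → Fin d) × (Fin k → Fin d), f (Fin.append p.1 p.2) :=
    (Fintype.sum_equiv (Fin.appendEquiv n k) (fun p => f (Fin.append p.1 p.2)) f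
      (fun p => rfl)).symm
  rw [h1, Fintype.sum_prod_type]

lemma sum_cons {M : Type*} [AddCommMonoid M] (n : ℕ) (f : Word d (n + 1) → M) :
    ∑ β : Word d (n + 1), f β
      = ∑ j : Fin d, ∑ γ : Word d n, f (Fin.cons j γ) := by
  have h1 : ∑ β : Word d (n + 1), f β
      = ∑ p : Fin d × (Fin n → Fin d), f (Fin.cons p.1 p.2) :=
    (Fintype.sum_equiv (Fin.consEquiv (fun _ : Fin (n + 1) => Fin d))
      (fun p => f (Fin.cons p.1 p.2)) f (fun p => rfl)).symm
  rw [h1, Fintype.sum_prod_type]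

lemma sum_word1 {M : Type*} [AddCommMonoid M] (f : Word d 1 → M) :
    ∑ w : Word d 1, f w = ∑ j : Fin d, f (fun _ => j) := by
  refine Fintype.sum_equiv (Equiv.funUnique (Fin 1) (Fin d)) _ _ (fun w => ?_)
  congr 1
  funext i
  have : i = 0 := Subsingleton.elim i 0
  subst this; rfl

variable {V : Fin d → H →L[ℂ] H} {Vdag : H →L[ℂ] Hn H d 1}

lemma Siter_zero_apply (h : H) (β : Word d 0) : Siter H Vdag 0 h β = h := by
  rw [show Siter H Vdag 0 = singleCLM H d 0 (fun i => i.elim0) from rfl]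
  rw [singleCLM_apply]
  rw [if_pos (funext (fun i : Fin 0 => i.elim0))]

lemma Siter_succ_apply (n : ℕ) (h : H) (β : Word d (n + 1)) :
    Siter H Vdag (n + 1) h β
      = Vdag (Siter H Vdag n h (fun i => β (Fin.castAdd 1 i))) (fun i => β (Fin.natAdd n i)) := by
  rw [show Siter H Vdag (n + 1) = (ampS H d n 1 Vdag).comp (Siter H Vdag n) from rfl]
  exact ampS_apply n 1 Vdag (Siter H Vdag n h) β

lemma Vtilde_zero (x : Hn H d 0) : Vtilde H V 0 x = x (fun i => i.elim0) := by
  rw [Vtilde_apply, Fintype.sum_unique]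
  rw [show Vword H V 0 default = ContinuousLinearMap.id ℂ H from rfl]
  simp only [ContinuousLinearMap.coe_id', id_eq]
  exact congrArg x (Subsingleton.elim _ _)

lemma Vtilde_split (n k : ℕ) (x : Hn H d (n + k)) :
    Vtilde H V (n + k) x
      = Vtilde H V n (WithLp.toLp 2 (fun α => Vtilde H V k (WithLp.toLp 2 (fun γ => x (Fin.append α γ))))) := by
  simp only [Vtilde_apply, WithLp.ofLp_toLp]
  rw [sum_append]
  refine Finset.sum_congr rfl (fun α _ => ?_)
  rw [map_sum]
  refine Finset.sum_congr rfl (fun γ _ => ?_)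
  rw [Vword_append]
  rfl

lemma Vtilde_cons (n : ℕ) (x : Hn H d (n + 1)) :
    Vtilde H V (n + 1) x
      = ∑ j : Fin d, V j (Vtilde H V n (WithLp.toLp 2 (fun γ => x (Fin.cons j γ)))) := by
  simp only [Vtilde_apply, WithLp.ofLp_toLp]
  rw [sum_cons]
  refine Finset.sum_congr rfl (fun j _ => ?_)
  rw [map_sum]
  refine Finset.sum_congr rfl (fun γ _ => ?_)
  rw [Vword_cons]
  rfl

lemma Vtilde_castHn {m k : ℕ} (h : m = k) (x : Hn H d m) :
    Vtilde H V k (castHn H d h x) = Vtilde H V m x := by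
  subst h; rfl

lemma Siter_swap (n : ℕ) (h : H) (β : Word d (n + 1)) :
    Siter H Vdag (n + 1) h β
      = Siter H Vdag n (Vdag h (fun _ => β 0)) (fun i => β i.succ) := by
  induction n with
  | zero =>
      rw [Siter_succ_apply, Siter_zero_apply, Siter_zero_apply]
      have : (fun i : Fin 1 => β (Fin.natAdd 0 i)) = (fun _ : Fin 1 => β 0) := by
        funext i
        have hi : i = 0 := Subsingleton.elim i 0
        subst hi
        congr 1
      rw [this]
  | succ n ih =>
      rw [Siter_succ_apply, ih, Siter_succ_apply]
      have E1 : (fun _ : Fin 1 => β (Fin.castAdd 1 (0 : Fin (n + 1)))) = (fun _ : Fin 1 => β 0) := by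
        funext j; congr 1
      have E2 : (fun i : Fin n => β (Fin.castAdd 1 i.succ))
          = (fun i : Fin n => β ((Fin.castAdd 1 i).succ)) := by
        funext i; congr 1
      have E3 : (fun i : Fin 1 => β (Fin.natAdd (n + 1) i))
          = (fun i : Fin 1 => β ((Fin.natAdd n i).succ)) := by
        funext i; congr 1; ext; simp
      rw [E3, E1, E2]

lemma Q_fix (mp1 : (Vtilde H V 1).comp (Vdag.comp (Vtilde H V 1)) = Vtilde H V 1)
    (y : Hn H d 1) :
    Vtilde H V 1 (Vdag (Vtilde H V 1 y)) = Vtilde H V 1 y := by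
  have := ContinuousLinearMap.ext_iff.mp mp1 y
  simpa using this

lemma Q_inner (mp3 : IsSelfAdjoint ((Vtilde H V 1).comp Vdag)) (x y : H) :
    (inner ℂ (Vtilde H V 1 (Vdag x)) y : ℂ) = inner ℂ x (Vtilde H V 1 (Vdag y)) := by
  have := mp3.isSymmetric x y
  simpa using this

lemma sub_Q_mem_W (mp1 : (Vtilde H V 1).comp (Vdag.comp (Vtilde H V 1)) = Vtilde H V 1)
    (mp3 : IsSelfAdjoint ((Vtilde H V 1).comp Vdag)) (h : H) :
    h - Vtilde H V 1 (Vdag h) ∈ (LinearMap.range (Vtilde H V 1).toLinearMap)ᗮ := by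
  rw [Submodule.mem_orthogonal]
  rintro u ⟨ξ, rfl⟩
  simp only [ContinuousLinearMap.coe_coe]
  rw [inner_sub_right, ← Q_inner mp3 (Vtilde H V 1 ξ) h, Q_fix mp1 ξ, sub_self]

lemma Q_zero_of_mem_W (mp1 : (Vtilde H V 1).comp (Vdag.comp (Vtilde H V 1)) = Vtilde H V 1)
    (mp3 : IsSelfAdjoint ((Vtilde H V 1).comp Vdag))
    (h : H) (hW : h ∈ (LinearMap.range (Vtilde H V 1).toLinearMap)ᗮ) :
    Vtilde H V 1 (Vdag h) = 0 := by
  have h1 : (inner ℂ (Vtilde H V 1 (Vdag h)) (Vtilde H V 1 (Vdag h)) : ℂ) = 0 := by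
    rw [Q_inner mp3 h (Vtilde H V 1 (Vdag h))]
    have hm : Vtilde H V 1 (Vdag (Vtilde H V 1 (Vdag h))) ∈ LinearMap.range (Vtilde H V 1).toLinearMap :=
      ⟨_, rfl⟩
    have h2 := (Submodule.mem_orthogonal _ h).mp hW _ hm
    rw [← inner_conj_symm, h2, map_zero]
  exact inner_self_eq_zero.mp h1

lemma Vdag_zero_of_mem_W (mp1 : (Vtilde H V 1).comp (Vdag.comp (Vtilde H V 1)) = Vtilde H V 1)
    (mp2 : Vdag.comp ((Vtilde H V 1).comp Vdag) = Vdag)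
    (mp3 : IsSelfAdjoint ((Vtilde H V 1).comp Vdag))
    (h : H) (hW : h ∈ (LinearMap.range (Vtilde H V 1).toLinearMap)ᗮ) :
    Vdag h = 0 := by
  have h1 : Vdag (Vtilde H V 1 (Vdag h)) = Vdag h := by
    have := ContinuousLinearMap.ext_iff.mp mp2 h
    simpa using this
  rw [← h1, Q_zero_of_mem_W mp1 mp3 h hW, map_zero]

lemma mem_W_of_Vdag_zero (mp1 : (Vtilde H V 1).comp (Vdag.comp (Vtilde H V 1)) = Vtilde H V 1)
    (mp3 : IsSelfAdjoint ((Vtilde H V 1).comp Vdag))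
    (h : H) (hz : Vdag h = 0) :
    h ∈ (LinearMap.range (Vtilde H V 1).toLinearMap)ᗮ := by
  have := sub_Q_mem_W mp1 mp3 (Vdag := Vdag) h
  rwa [hz, map_zero, sub_zero] at this

lemma Vtilde_one_sum (ξ : Hn H d 1) :
    Vtilde H V 1 ξ = ∑ j : Fin d, V j (ξ (fun _ => j)) := by
  rw [Vtilde_apply, sum_word1]
  exact Finset.sum_congr rfl (fun j _ => by rw [Vword_one])

lemma Cprime (reg : RepRegular H V) (i : ℕ)
    (hK : ∀ z : Hn H d i, Vtilde H V i (Siter H Vdag i (Vtilde H V i z)) = Vtilde H V i z)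
    (ξ : Hn H d 1) (hξ : Vtilde H V 1 ξ = 0) :
    ∑ j : Fin d, V j (Vtilde H V i (Siter H Vdag i (ξ (fun _ => j)))) = 0 := by
  rcases Nat.eq_zero_or_pos i with hi | hi
  · subst hi
    have e : ∀ j : Fin d, Vtilde H V 0 (Siter H Vdag 0 (ξ (fun _ => j))) = ξ (fun _ => j) := by
      intro j; rw [Vtilde_zero, Siter_zero_apply]
    simp only [e]
    rw [← Vtilde_one_sum, hξ]
  · obtain ⟨η, hη⟩ := reg.2 1 i le_rfl hi (LinearMap.mem_ker.mpr hξ)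
    have hcomp : ∀ w : Word d 1, ξ w = Vtilde H V i (WithLp.toLp 2 (fun γ => η (Fin.append w γ))) := by
      intro w; rw [← hη]; exact ampV_apply 1 i _ η w
    calc ∑ j : Fin d, V j (Vtilde H V i (Siter H Vdag i (ξ (fun _ => j))))
        = ∑ j : Fin d, V j (ξ (fun _ => j)) := by
          refine Finset.sum_congr rfl (fun j _ => ?_)
          rw [hcomp (fun _ => j), hK]
      _ = Vtilde H V 1 ξ := (Vtilde_one_sum ξ).symm
      _ = 0 := hξ

lemma TK (mp1 : (Vtilde H V 1).comp (Vdag.comp (Vtilde H V 1)) = Vtilde H V 1)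
    (reg : RepRegular H V) :
    ∀ i : ℕ, ∀ z : Hn H d i,
      Vtilde H V i (Siter H Vdag i (Vtilde H V i z)) = Vtilde H V i z := by
  intro i
  induction i with
  | zero => intro z; rw [Vtilde_zero (x := Siter H Vdag 0 (Vtilde H V 0 z)), Siter_zero_apply]
  | succ i ih =>
      intro z
      set y := Vtilde H V (i + 1) z with hy
      set uu : Hn H d 1
        := WithLp.toLp 2 (fun w : Word d 1 => Vtilde H V i (WithLp.toLp 2 (fun γ : Word d i => z (Fin.cons (w 0) γ))))
        with huu
      have hb : ∀ j : Fin d,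
          uu (fun _ : Fin 1 => j) = Vtilde H V i (WithLp.toLp 2 (fun γ => z (Fin.cons j γ))) := by
        intro j; rw [huu]
      have hyu : Vtilde H V 1 uu = y := by
        rw [Vtilde_one_sum]
        simp only [hb]
        rw [hy, Vtilde_cons]
      have E : ∀ (j : Fin d) (γ : Word d i),
          Siter H Vdag (i + 1) y (Fin.cons j γ)
            = Siter H Vdag i (Vdag y (fun _ => j)) γ := by
        intro j γ
        rw [Siter_swap]
        have h1 : (fun _ : Fin 1 => Fin.cons (α := fun _ : Fin (i+1) => Fin d) j γ (0 : Fin (i + 1))) = (fun _ : Fin 1 => j) := by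
          funext x; exact Fin.cons_zero (α := fun _ : Fin (i+1) => Fin d) j γ
        have h2 : (fun i1 : Fin i => Fin.cons (α := fun _ : Fin (i+1) => Fin d) j γ i1.succ) = γ := by
          funext i1; exact Fin.cons_succ (α := fun _ : Fin (i+1) => Fin d) j γ i1
        rw [h2]
        exact congrArg (fun w => Siter H Vdag i (Vdag y w) γ) h1
      have hker : Vtilde H V 1 ((Vdag y) - uu) = 0 := by
        rw [map_sub, ← hyu, Q_fix mp1, sub_self]
      calc Vtilde H V (i + 1) (Siter H Vdag (i + 1) y)
          = ∑ j : Fin d, V j (Vtilde H V i (Siter H Vdag i (Vdag y (fun _ => j)))) := by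
            rw [Vtilde_cons]
            exact Finset.sum_congr rfl (fun j _ =>
              congrArg _ (congrArg _ (PiLp.ext (fun γ => E j γ))))
        _ = ∑ j : Fin d,
              (V j (Vtilde H V i (Siter H Vdag i (((Vdag y) - uu) (fun _ => j))))
              + V j (Vtilde H V i (Siter H Vdag i (uu (fun _ => j))))) := by
            refine Finset.sum_congr rfl (fun j _ => ?_)
            have hsplit : (Vdag y) (fun _ : Fin 1 => j)
                = (((Vdag y) - uu) (fun _ => j)) + uu (fun _ => j) := by
              have hrfl : ((Vdag y) - uu) (fun _ : Fin 1 => j)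
                  = (Vdag y) (fun _ : Fin 1 => j) - uu (fun _ : Fin 1 => j) := rfl
              rw [hrfl, sub_add_cancel]
            rw [hsplit, map_add, map_add, map_add]
        _ = y := by
            rw [Finset.sum_add_distrib, Cprime reg i ih _ hker, zero_add]
            have e : ∀ j : Fin d,
                V j (Vtilde H V i (Siter H Vdag i (uu (fun _ : Fin 1 => j))))
                  = V j (uu (fun _ : Fin 1 => j)) := by
              intro j; rw [hb j, ih]
            simp only [e]
            rw [← Vtilde_one_sum, hyu]

lemma main_sup (mp1 : (Vtilde H V 1).comp (Vdag.comp (Vtilde H V 1)) = Vtilde H V 1)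
    (reg : RepRegular H V) (i m : ℕ) (ξ : Hn H d (m + 1))
    (hξ : ∀ α : Word d m, Vtilde H V 1 (WithLp.toLp 2 (fun γ : Word d 1 => ξ (Fin.append α γ))) = 0) :
    Vtilde H V ((m + 1) + i) (ampS H d (m + 1) i (Siter H Vdag i) ξ) = 0 := by
  rw [Vtilde_split (m + 1) i]
  have hb : ∀ α : Word d (m + 1),
      (fun γ : Word d i => ampS H d (m + 1) i (Siter H Vdag i) ξ (Fin.append α γ))
        = fun γ => Siter H Vdag i (ξ α) γ := by
    intro α; funext γ
    rw [ampS_apply]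
    have e1 : (fun a : Fin (m + 1) => Fin.append α γ (Fin.castAdd i a)) = α :=
      funext (fun a => Fin.append_left α γ a)
    have e2 : (fun b : Fin i => Fin.append α γ (Fin.natAdd (m + 1) b)) = γ :=
      funext (fun b => Fin.append_right α γ b)
    rw [e1, e2]
  have hbody : (fun α => Vtilde H V i
        (WithLp.toLp 2 (fun γ => ampS H d (m + 1) i (Siter H Vdag i) ξ (Fin.append α γ))))
      = fun α => Vtilde H V i (Siter H Vdag i (ξ α)) :=
    funext (fun α => congrArg (fun g => Vtilde H V i (WithLp.toLp 2 g)) (hb α))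
  rw [hbody, Vtilde_apply]
  simp only [WithLp.ofLp_toLp]
  rw [sum_append m 1]
  refine Finset.sum_eq_zero (fun α' _ => ?_)
  have e1 : ∀ w : Word d 1,
      Vword H V (m + 1) (Fin.append α' w)
          (Vtilde H V i (Siter H Vdag i (ξ (Fin.append α' w))))
        = Vword H V m α' (V (w 0) (Vtilde H V i (Siter H Vdag i (ξ (Fin.append α' w))))) := by
    intro w
    rw [Vword_append, ContinuousLinearMap.comp_apply, Vword_one]
  rw [Finset.sum_congr rfl (fun w _ => e1 w), ← map_sum]
  have e2 : ∑ w : Word d 1, V (w 0) (Vtilde H V i (Siter H Vdag i (ξ (Fin.append α' w)))) = 0 := by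
    rw [sum_word1]
    exact Cprime reg i (TK mp1 reg i) (WithLp.toLp 2 (fun w => ξ (Fin.append α' w))) (hξ α')
  rw [e2, map_zero]

def consCLM (i : ℕ) (j : Fin d) : Hn H d i →L[ℂ] Hn H d (i + 1) :=
  ((PiLp.continuousLinearEquiv 2 ℂ (fun _ : Word d (i + 1) => H)).symm.toContinuousLinearMap).comp
    (ContinuousLinearMap.pi (fun β : Word d (i + 1) =>
      if β 0 = j then coord H d i (Fin.tail β) else 0))

lemma consCLM_apply (i : ℕ) (j : Fin d) (x : Hn H d i) (β : Word d (i + 1)) :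
    consCLM (H := H) i j x β = if β 0 = j then x (Fin.tail β) else 0 := by
  simp only [consCLM]
  by_cases hb : β 0 = j <;> simp [hb, ContinuousLinearMap.pi_apply] <;> rfl

lemma mem_HnSub {n : ℕ} {K : Submodule ℂ H} {y : Hn H d n} :
    y ∈ HnSub H d n K ↔ ∀ α : Word d n, y α ∈ K := by
  simp only [HnSub, Submodule.mem_iInf, Submodule.mem_comap]
  rfl

lemma mem_odotSub {m : ℕ} {K : Submodule ℂ (Hn H d 1)} {ξ : Hn H d (m + 1)} :
    ξ ∈ odotSub H d m K ↔ ∀ α : Word d m, blockIn H d m 1 α ξ ∈ K := by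
  simp only [odotSub, Submodule.mem_iInf, Submodule.mem_comap]
  rfl

lemma Vtilde_consCLM (i : ℕ) (j : Fin d) (x : Hn H d i) :
    Vtilde H V (i + 1) (consCLM (H := H) i j x) = V j (Vtilde H V i x) := by
  rw [Vtilde_cons]
  have e : ∀ j' : Fin d,
      Vtilde H V i (WithLp.toLp 2 (fun γ => consCLM (H := H) i j x (Fin.cons j' γ)))
        = if j' = j then Vtilde H V i x else 0 := by
    intro j'
    by_cases h : j' = j
    · subst h
      rw [if_pos rfl]
      congr 1
      ext γ
      show consCLM (H := H) i _ x (Fin.cons _ γ) = x γ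
      rw [consCLM_apply, if_pos, Fin.tail_cons]
      exact Fin.cons_zero _ _
    · rw [if_neg h]
      have hz : WithLp.toLp 2 (fun γ => consCLM (H := H) i j x (Fin.cons j' γ)) = (0 : Hn H d i) := by
        ext γ
        show consCLM (H := H) i j x (Fin.cons j' γ) = (0 : Hn H d i) γ
        rw [consCLM_apply, if_neg]
        · rfl
        · rw [Fin.cons_zero]; exact h
      rw [hz, map_zero]
  have e2 : ∀ j' : Fin d,
      V j' (Vtilde H V i (WithLp.toLp 2 (fun γ => consCLM (H := H) i j x (Fin.cons j' γ))))
        = if j' = j then V j (Vtilde H V i x) else 0 := by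
    intro j'
    rw [e j']
    by_cases h : j' = j
    · subst h; simp
    · simp [h]
  rw [Finset.sum_congr rfl (fun j' _ => e2 j')]
  simp

lemma consCLM_mem (i : ℕ) (j : Fin d) (K : Submodule ℂ H) (x : Hn H d i)
    (hx : x ∈ HnSub H d i K) : consCLM (H := H) i j x ∈ HnSub H d (i + 1) K := by
  rw [mem_HnSub] at hx ⊢
  intro β
  rw [consCLM_apply]
  by_cases h : β 0 = j
  · rw [if_pos h]; exact hx _
  · rw [if_neg h]; exact K.zero_mem

lemma mapClo {X Y : Type*} [NormedAddCommGroup X] [NormedSpace ℂ X]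
    [NormedAddCommGroup Y] [NormedSpace ℂ Y]
    (f : X →L[ℂ] Y) (s : Submodule ℂ X) (t : Submodule ℂ Y)
    (hle : Submodule.map (f : X →ₗ[ℂ] Y) s ≤ t) (x : X)
    (hx : x ∈ s.topologicalClosure) : f x ∈ t.topologicalClosure := by
  have h1 : f x ∈ closure (f '' (s : Set X)) :=
    map_mem_closure f.continuous hx (fun z hz => Set.mem_image_of_mem f hz)
  have h2 : closure (f '' (s : Set X)) ⊆ closure (t : Set Y) := by
    apply closure_mono
    rintro w ⟨z, hz, rfl⟩
    exact hle ⟨z, hz, rfl⟩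
  exact h2 h1

lemma Siter_swap_cons (n : ℕ) (h : H) (j : Fin d) (γ : Word d n) :
    Siter H Vdag (n + 1) h (Fin.cons j γ) = Siter H Vdag n (Vdag h (fun _ => j)) γ := by
  rw [Siter_swap]
  have h1 : (fun _ : Fin 1 => Fin.cons (α := fun _ : Fin (n+1) => Fin d) j γ (0 : Fin (n + 1)))
      = (fun _ : Fin 1 => j) := by
    funext x; exact Fin.cons_zero (α := fun _ : Fin (n+1) => Fin d) j γ
  have h2 : (fun i1 : Fin n => Fin.cons (α := fun _ : Fin (n+1) => Fin d) j γ i1.succ) = γ := by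
    funext i1; exact Fin.cons_succ (α := fun _ : Fin (n+1) => Fin d) j γ i1
  rw [h2]
  exact congrArg (fun w => Siter H Vdag n (Vdag h w) γ) h1

lemma W_term_mem (mp1 : (Vtilde H V 1).comp (Vdag.comp (Vtilde H V 1)) = Vtilde H V 1)
    (n : ℕ) (hn : 1 ≤ n) (h : H) (hW : h ∈ (LinearMap.range (Vtilde H V 1).toLinearMap)ᗮ) :
    h ∈ (⨆ i ∈ Finset.range n, Submodule.map (Vtilde H V i).toLinearMap
      (HnSub H d i ((LinearMap.range (Vtilde H V 1).toLinearMap)ᗮ))).topologicalClosure := by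
  refine Submodule.le_topologicalClosure _ ?_
  refine Submodule.mem_iSup_of_mem 0 (Submodule.mem_iSup_of_mem (Finset.mem_range.mpr hn) ?_)
  exact ⟨Siter H Vdag 0 h, mem_HnSub.mpr (fun α => by rw [Siter_zero_apply]; exact hW),
    by rw [ContinuousLinearMap.coe_coe, Vtilde_zero]; exact Siter_zero_apply h _⟩

lemma part1 (mp1 : (Vtilde H V 1).comp (Vdag.comp (Vtilde H V 1)) = Vtilde H V 1)
    (mp3 : IsSelfAdjoint ((Vtilde H V 1).comp Vdag))
    (n : ℕ) (hn : 1 ≤ n) :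
    LinearMap.ker (Siter H Vdag n).toLinearMap ≤
      (⨆ i ∈ Finset.range n, Submodule.map (Vtilde H V i).toLinearMap
        (HnSub H d i ((LinearMap.range (Vtilde H V 1).toLinearMap)ᗮ))).topologicalClosure := by
  induction n, hn using Nat.le_induction with
  | base =>
      intro h hker
      have h0 : Siter H Vdag 1 h = 0 := LinearMap.mem_ker.mp hker
      have key : ∀ β : Word d (0 + 1),
          Siter H Vdag (0 + 1) h β = Vdag h (fun i => β (Fin.natAdd 0 i)) := by
        intro β; rw [Siter_succ_apply, Siter_zero_apply]
      have hvd : Vdag h = 0 := by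
        ext w
        have h2 : w = (fun i : Fin 1 => w (Fin.natAdd 0 i)) := by
          funext i1; congr 1; ext; simp
        calc Vdag h w = Vdag h (fun i : Fin 1 => w (Fin.natAdd 0 i)) := by rw [← h2]
          _ = Siter H Vdag (0 + 1) h w := (key w).symm
          _ = 0 := by rw [h0]; rfl
      exact W_term_mem mp1 1 le_rfl h (mem_W_of_Vdag_zero mp1 mp3 h hvd)
  | succ n hn ih =>
      intro h hker
      have h0 : Siter H Vdag (n + 1) h = 0 := LinearMap.mem_ker.mp hker
      have hS : ∀ j : Fin d, Siter H Vdag n (Vdag h (fun _ => j)) = 0 := by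
        intro j
        ext γ
        calc Siter H Vdag n (Vdag h (fun _ => j)) γ
            = Siter H Vdag (n + 1) h (Fin.cons j γ) := (Siter_swap_cons n h j γ).symm
          _ = 0 := by rw [h0]; rfl
      have hterm : ∀ j : Fin d,
          V j (Vdag h (fun _ => j)) ∈
            (⨆ i ∈ Finset.range (n + 1), Submodule.map (Vtilde H V i).toLinearMap
              (HnSub H d i ((LinearMap.range (Vtilde H V 1).toLinearMap)ᗮ))).topologicalClosure := by
        intro j
        refine mapClo (V j) _ _ ?_ _ (ih (LinearMap.mem_ker.mpr (hS j)))
        rw [Submodule.map_iSup]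
        refine iSup_le (fun i => ?_)
        rw [Submodule.map_iSup]
        refine iSup_le (fun hi => ?_)
        rintro _ ⟨_, ⟨x, hx, rfl⟩, rfl⟩
        refine Submodule.mem_iSup_of_mem (i + 1) (Submodule.mem_iSup_of_mem
          (Finset.mem_range.mpr (Nat.succ_lt_succ (Finset.mem_range.mp hi))) ?_)
        exact ⟨consCLM (H := H) i j x, consCLM_mem i j _ x hx, Vtilde_consCLM i j x⟩
      have hWterm : (h - Vtilde H V 1 (Vdag h)) ∈
          (⨆ i ∈ Finset.range (n + 1), Submodule.map (Vtilde H V i).toLinearMap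
            (HnSub H d i ((LinearMap.range (Vtilde H V 1).toLinearMap)ᗮ))).topologicalClosure :=
        W_term_mem mp1 (n + 1) (Nat.le_add_left 1 n) _ (sub_Q_mem_W mp1 mp3 h)
      have hsum := Submodule.add_mem _ hWterm
        (Submodule.sum_mem _ (fun j (_ : j ∈ Finset.univ) => hterm j))
      have hdec : (h - Vtilde H V 1 (Vdag h)) + ∑ j : Fin d, V j (Vdag h (fun _ => j)) = h := by
        rw [← Vtilde_one_sum, sub_add_cancel]
      rwa [hdec] at hsum

lemma castHn_id {a : ℕ} (h : a = a) (x : Hn H d a) : castHn H d h x = x := rfl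

lemma castHn_mem_odotSub {a b : ℕ} (h : a = b) (h2 : a + 1 = b + 1)
    (K : Submodule ℂ (Hn H d 1)) (ξ : Hn H d (a + 1)) (hξ : ξ ∈ odotSub H d a K) :
    castHn H d h2 ξ ∈ odotSub H d b K := by
  subst h
  rw [castHn_id]
  exact hξ

def GS (Vd : H →L[ℂ] Hn H d 1) (N i : ℕ) (hi : i < N) :
    Hn H d ((N - i - 1) + 1) →L[ℂ] Hn H d N :=
  (castHn H d (Nat.sub_add_cancel hi.le)).comp
    ((ampS H d (N - i) i (Siter H Vd i)).comp
      (castHn H d (by omega : (N - i - 1) + 1 = N - i)))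

lemma GS_apply (N i : ℕ) (hi : i < N) (ξ : Hn H d ((N - i - 1) + 1)) (β : Word d N) :
    GS Vdag N i hi ξ β
      = Siter H Vdag i
          (ξ (fun a => β ⟨a.val, by have := a.isLt; omega⟩))
          (fun b : Fin i => β ⟨(N - i) + b.val, by have := b.isLt; omega⟩) := by
  show castHn H d _ (ampS H d (N - i) i (Siter H Vdag i) (castHn H d _ ξ)) β = _
  rw [castHn_apply, ampS_apply, castHn_apply]
  rfl

lemma GS_zero_id (N : ℕ) (x : Hn H d (N + 1)) :
    GS Vdag (N + 1) 0 (Nat.succ_pos N) x = x := by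
  ext β
  rw [GS_apply, Siter_zero_apply]
  rfl

set_option maxHeartbeats 1000000 in
lemma stepJ (N i : ℕ) (hi : i < N) (ξ : Hn H d ((N - i - 1) + 1)) :
    ampS H d N 1 Vdag (GS Vdag N i hi ξ)
      = GS Vdag (N + 1) (i + 1) (by omega)
          (castHn H d (by omega : ((N - i - 1) + 1) = (((N + 1) - (i + 1) - 1) + 1)) ξ) := by
  ext β
  have hM : ampS H d N 1 Vdag (GS Vdag N i hi ξ) β
      = Vdag (Siter H Vdag i
          (ξ (fun a => β ⟨a.val, by have := a.isLt; have := hi; omega⟩))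
          (fun b : Fin i => β ⟨(N - i) + b.val, by have := b.isLt; have := hi; omega⟩))
          (fun c : Fin 1 => β ⟨N + c.val, by have := c.isLt; omega⟩) := by
    rw [ampS_apply, GS_apply]
    rfl
  rw [hM, GS_apply, castHn_apply, Siter_succ_apply]
  have e2 : (fun b : Fin i =>
        β (⟨((N + 1) - (i + 1)) + (Fin.castAdd 1 b).val,
          by have := b.isLt; have := hi; omega⟩ : Fin (N + 1)))
      = (fun b : Fin i =>
        β (⟨(N - i) + b.val, by have := b.isLt; have := hi; omega⟩ : Fin (N + 1))) := by
    funext b; congr 1; ext; simp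
  have e3 : (fun c : Fin 1 =>
        β (⟨((N + 1) - (i + 1)) + (Fin.natAdd i c).val,
          by have := c.isLt; have := hi; omega⟩ : Fin (N + 1)))
      = (fun c : Fin 1 => β (⟨N + c.val, by have := c.isLt; omega⟩ : Fin (N + 1))) := by
    funext c; congr 1; ext; simp; omega
  rw [e2, e3]
  rfl

def DSup (V' : Fin d → H →L[ℂ] H) (Vd : H →L[ℂ] Hn H d 1) (N : ℕ) : Submodule ℂ (Hn H d N) :=
  ⨆ i : Fin N, Submodule.map (GS Vd N i.val i.isLt).toLinearMap
    (odotSub H d (N - i.val - 1) (LinearMap.ker (Vtilde H V' 1).toLinearMap))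

lemma main_sup' (mp1 : (Vtilde H V 1).comp (Vdag.comp (Vtilde H V 1)) = Vtilde H V 1)
    (reg : RepRegular H V) (i : ℕ) {a b : ℕ} (hab : a + 1 = b) (ξ : Hn H d (a + 1))
    (hξ : ξ ∈ odotSub H d a (LinearMap.ker (Vtilde H V 1).toLinearMap)) :
    Vtilde H V (b + i) (ampS H d b i (Siter H Vdag i) (castHn H d hab ξ)) = 0 := by
  subst hab
  rw [castHn_id]
  refine main_sup mp1 reg i a ξ (fun α => ?_)
  exact LinearMap.mem_ker.mp (mem_odotSub.mp hξ α)

lemma step_mem (N i : ℕ) (hi : i < N) (ξ : Hn H d ((N - i - 1) + 1))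
    (hξ : ξ ∈ odotSub H d (N - i - 1) (LinearMap.ker (Vtilde H V 1).toLinearMap)) :
    ampS H d N 1 Vdag (GS Vdag N i hi ξ) ∈ DSup V Vdag (N + 1) := by
  have hlt : i + 1 < N + 1 := by omega
  refine Submodule.mem_iSup_of_mem ⟨i + 1, hlt⟩ ?_
  refine ⟨castHn H d (show ((N - i - 1) + 1) = (((N + 1) - (i + 1) - 1) + 1) by omega) ξ, ?_, ?_⟩
  · exact castHn_mem_odotSub (show (N - i - 1) = ((N + 1) - (i + 1) - 1) by omega) _ _ ξ hξ
  · exact (stepJ N i hi ξ).symm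

lemma part2_le (mp1 : (Vtilde H V 1).comp (Vdag.comp (Vtilde H V 1)) = Vtilde H V 1) :
    ∀ n (x : Hn H d (n + 1)), Vtilde H V (n + 1) x = 0 →
      x ∈ (DSup V Vdag (n + 1)).topologicalClosure := by
  intro n
  induction n with
  | zero =>
      intro x hx
      refine Submodule.le_topologicalClosure _ ?_
      refine Submodule.mem_iSup_of_mem ⟨0, Nat.succ_pos 0⟩ ?_
      refine ⟨x, ?_, GS_zero_id 0 x⟩
      refine mem_odotSub.mpr (fun α => ?_)
      refine LinearMap.mem_ker.mpr ?_
      have e : blockIn H d 0 1 α x = x := by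
        ext γ
        show x (Fin.append α γ) = x γ
        refine congrArg (fun w => x w) ?_
        funext i1
        have h1 : i1 = Fin.natAdd 0 i1 := by ext; simp
        conv_lhs => rw [h1]
        exact Fin.append_right α γ i1
      show Vtilde H V 1 (blockIn H d 0 1 α x) = 0
      rw [e]
      exact hx
  | succ n ih =>
      intro x hx
      have haodot : x - ampS H d (n + 1) 1 Vdag (ampV H d (n + 1) 1 (Vtilde H V 1) x)
          ∈ odotSub H d (n + 1) (LinearMap.ker (Vtilde H V 1).toLinearMap) := by
        refine mem_odotSub.mpr (fun α => ?_)
        refine LinearMap.mem_ker.mpr ?_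
        rw [map_sub]
        have hJ : blockIn H d (n + 1) 1 α
              (ampS H d (n + 1) 1 Vdag (ampV H d (n + 1) 1 (Vtilde H V 1) x))
            = Vdag (ampV H d (n + 1) 1 (Vtilde H V 1) x α) := by
          ext γ
          rw [blockIn_apply, ampS_apply]
          have w1 : (fun a : Fin (n + 1) => Fin.append α γ (Fin.castAdd 1 a)) = α :=
            funext (fun a => Fin.append_left α γ a)
          have w2 : (fun b : Fin 1 => Fin.append α γ (Fin.natAdd (n + 1) b)) = γ :=
            funext (fun b => Fin.append_right α γ b)
          rw [w1, w2]
        have hrα : ampV H d (n + 1) 1 (Vtilde H V 1) x α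
            = Vtilde H V 1 (blockIn H d (n + 1) 1 α x) := ampV_apply _ _ _ x α
        rw [map_sub, hJ, hrα, ContinuousLinearMap.coe_coe, Q_fix mp1, sub_self]
      have hrker : Vtilde H V (n + 1) (ampV H d (n + 1) 1 (Vtilde H V 1) x) = 0 := by
        have e : ampV H d (n + 1) 1 (Vtilde H V 1) x
            = WithLp.toLp 2 (fun α => Vtilde H V 1 (WithLp.toLp 2 (fun γ => x (Fin.append α γ)))) :=
          PiLp.ext (fun α => ampV_apply _ _ _ x α)
        rw [e, ← Vtilde_split]
        exact hx
      have hb : ampS H d (n + 1) 1 Vdag (ampV H d (n + 1) 1 (Vtilde H V 1) x)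
          ∈ (DSup V Vdag (n + 1 + 1)).topologicalClosure := by
        refine mapClo (ampS H d (n + 1) 1 Vdag) _ _ ?_ _ (ih _ hrker)
        rw [DSup, Submodule.map_iSup]
        refine iSup_le (fun i => ?_)
        rintro _ ⟨_, ⟨ξ, hξ, rfl⟩, rfl⟩
        exact step_mem (n + 1) i.val i.isLt ξ hξ
      have ha : x - ampS H d (n + 1) 1 Vdag (ampV H d (n + 1) 1 (Vtilde H V 1) x)
          ∈ (DSup V Vdag (n + 1 + 1)).topologicalClosure := by
        refine Submodule.le_topologicalClosure _ ?_
        refine Submodule.mem_iSup_of_mem ⟨0, by omega⟩ ?_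
        exact ⟨_, haodot, GS_zero_id (n + 1) _⟩
      have := Submodule.add_mem _ ha hb
      rwa [sub_add_cancel] at this

end Aux


theorem stmt_15 (H : Type) [NormedAddCommGroup H] [InnerProductSpace ℂ H] [CompleteSpace H]
    (d : ℕ) (hd : 1 ≤ d) (V : Fin d → H →L[ℂ] H)
    (hcl : IsClosed (LinearMap.range (Vtilde H V 1).toLinearMap : Set H))
    (Vdag : H →L[ℂ] Hn H d 1)
    (mp1 : (Vtilde H V 1).comp (Vdag.comp (Vtilde H V 1)) = Vtilde H V 1)
    (mp2 : Vdag.comp ((Vtilde H V 1).comp Vdag) = Vdag)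
    (mp3 : IsSelfAdjoint ((Vtilde H V 1).comp Vdag))
    (mp4 : IsSelfAdjoint (Vdag.comp (Vtilde H V 1)))
    (n : ℕ) (hn : 1 ≤ n) :
    (LinearMap.ker (Siter H Vdag n).toLinearMap ≤
      (⨆ i ∈ Finset.range n,
        Submodule.map (Vtilde H V i).toLinearMap
          (HnSub H d i ((LinearMap.range (Vtilde H V 1).toLinearMap)ᗮ))).topologicalClosure) ∧
    (RepRegular H V →
      LinearMap.ker (Vtilde H V n).toLinearMap =
        (⨆ i : Fin n,
          Submodule.map
            ((castHn H d (Nat.sub_add_cancel i.isLt.le)).comp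
              ((ampS H d (n - (i : ℕ)) (i : ℕ) (Siter H Vdag (i : ℕ))).comp
                (castHn H d
                  (by have := i.isLt; omega : (n - (i : ℕ) - 1) + 1 = n - (i : ℕ))))).toLinearMap
            (odotSub H d (n - (i : ℕ) - 1)
              (LinearMap.ker (Vtilde H V 1).toLinearMap))).topologicalClosure) := by
  constructor
  · exact part1 mp1 mp3 n hn
  · intro reg
    obtain ⟨m, rfl⟩ : ∃ m, n = m + 1 := ⟨n - 1, by omega⟩
    refine le_antisymm ?_ ?_
    · intro x hx
      exact part2_le mp1 m x (LinearMap.mem_ker.mp hx)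
    · refine Submodule.topologicalClosure_minimal _ ?_ ?_
      · refine iSup_le (fun i => ?_)
        rintro _ ⟨ξ, hξ, rfl⟩
        refine LinearMap.mem_ker.mpr ?_
        simp only [ContinuousLinearMap.coe_coe]
        rw [ContinuousLinearMap.comp_apply, ContinuousLinearMap.comp_apply]
        rw [Vtilde_castHn]
        exact main_sup' mp1 reg i.val (by have := i.isLt; omega) ξ hξ
      · exact ContinuousLinearMap.isClosed_ker _
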